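/- Let K be a compact Hausdorff topological space, let M and N be Hausdorff topological spaces with M regular, and let f : M → N be a local homeomorphism. Then the pushforward map C(K,f) : C(K,M) → C(K,N), γ ↦ f ∘ γ, between the spaces of continuous maps equipped with the compact-open topology, is a local homeomorphism. -/

import Mathlib

open Set

/-- Let `K` be a compact Hausdorff topological space, `M` and `N` Hausdorff topological
spaces with `M` regular, and `f : M → N` a local homeomorphism. Then the pushforward
`C(K, M) → C(K, N)`, `γ ↦ f ∘ γ` (with the compact-open topologies), is a local
homeomorphism. -/
theorem isLocalHomeomorph_compContinuousMap
    {K M N : Type*} [TopologicalSpace K] [CompactSpace K] [T2Space K]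
    [TopologicalSpace M] [T2Space M] [RegularSpace M]
    [TopologicalSpace N] [T2Space N]
    (f : M → N) (hf : IsLocalHomeomorph f) :
    IsLocalHomeomorph
      (fun γ : C(K, M) => (⟨f, hf.continuous⟩ : C(M, N)).comp γ) := by
  classical
  intro γ₀
  -- charts of `f` around each point `γ₀ x`
  choose e he hfe using fun x : K => hf (γ₀ x)
  -- closed (hence compact) neighborhoods `C x ⊆ γ₀ ⁻¹' (e x).source`
  have hnh : ∀ x : K, γ₀ ⁻¹' (e x).source ∈ nhds x := fun x =>
    ((e x).open_source.preimage γ₀.continuous).mem_nhds (he x)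
  choose C hCmem hCcl hCsub using fun x => exists_mem_nhds_isClosed_subset (hnh x)
  obtain ⟨t, -, htc⟩ := isCompact_univ.elim_nhds_subcover C (fun x _ => hCmem x)
  have hcov : ∀ y : K, ∃ x, x ∈ t ∧ y ∈ C x := by
    intro y
    have := htc (mem_univ y)
    simpa using this
  choose ix hixt hixC using hcov
  have hCcomp : ∀ x, IsCompact (C x) := fun x => (hCcl x).isCompact
  set F : C(K, M) → C(K, N) :=
    fun γ : C(K, M) => (⟨f, hf.continuous⟩ : C(M, N)).comp γ with hFdef
  set U : Set C(K, M) :=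
    {γ | ∀ i ∈ t, ∀ j ∈ t, MapsTo γ (C i ∩ C j) ((e i).source ∩ (e j).source)} with hUdef
  set W : Set C(K, N) :=
    {δ | ∀ i ∈ t, ∀ j ∈ t, MapsTo δ (C i ∩ C j) (f '' ((e i).source ∩ (e j).source))} with hWdef
  -- the key well-definedness lemma for the local inverse
  have key : ∀ δ ∈ W, ∀ x : K, ∀ i ∈ t, x ∈ C i →
      (e (ix x)).symm (δ x) ∈ (e i).source ∧
      (e i).symm (δ x) = (e (ix x)).symm (δ x) ∧
      f ((e (ix x)).symm (δ x)) = δ x := by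
    intro δ hδ x i hi hxi
    obtain ⟨m, hm, hfm⟩ := hδ i hi (ix x) (hixt x) ⟨hxi, hixC x⟩
    have h1 : (e (ix x)).symm (δ x) = m := by
      have hm1 : (e (ix x)) m = δ x := by rw [← hfe (ix x)]; exact hfm
      rw [← hm1, OpenPartialHomeomorph.left_inv _ hm.2]
    have h2 : (e i).symm (δ x) = m := by
      have hm2 : (e i) m = δ x := by rw [← hfe i]; exact hfm
      rw [← hm2, OpenPartialHomeomorph.left_inv _ hm.1]
    refine ⟨h1 ▸ hm.1, h2.trans h1.symm, ?_⟩
    rw [h1]; exact hfm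
  -- continuity of the glued local inverse
  have lift_cont : ∀ δ ∈ W, Continuous fun x => (e (ix x)).symm (δ x) := by
    intro δ hδ
    have hcovU : ⋃ i : t, C (i : K) = univ :=
      eq_univ_of_forall fun y => mem_iUnion.2 ⟨⟨ix y, hixt y⟩, hixC y⟩
    refine (locallyFinite_of_finite (fun i : t => C (i : K))).continuous hcovU
      (fun i => hCcl _) ?_
    intro i
    have hmt : MapsTo δ (C (i : K)) (e (i : K)).target := by
      intro x hx
      obtain ⟨m, hm, hfm⟩ := hδ i i.2 i i.2 ⟨hx, hx⟩
      have : (e (i : K)) m = δ x := by rw [← hfe (i : K)]; exact hfm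
      exact this ▸ (e (i : K)).map_source hm.1
    have hc : ContinuousOn (fun x => (e (i : K)).symm (δ x)) (C (i : K)) :=
      (e (i : K)).continuousOn_symm.comp δ.continuous.continuousOn hmt
    exact hc.congr fun x hx => ((key δ hδ x i i.2 hx).2.1).symm
  set L : C(K, N) → C(K, M) := fun δ =>
    if hδ : δ ∈ W then ⟨fun x => (e (ix x)).symm (δ x), lift_cont δ hδ⟩ else γ₀ with hLdef
  have hLW : ∀ δ ∈ W, ∀ x, L δ x = (e (ix x)).symm (δ x) := by
    intro δ hδ x
    simp only [hLdef, dif_pos hδ]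
    rfl
  have hmemU : γ₀ ∈ U := fun i _ j _ x hx => ⟨hCsub i hx.1, hCsub j hx.2⟩
  have hFU : ∀ γ ∈ U, F γ ∈ W := fun γ hγ i hi j hj x hx =>
    ⟨γ x, hγ i hi j hj hx, rfl⟩
  have hLU : ∀ δ ∈ W, L δ ∈ U := by
    intro δ hδ i hi j hj x hx
    rw [hWdef] at hδ
    constructor
    · rw [hLW δ hδ x]; exact (key δ hδ x i hi hx.1).1
    · rw [hLW δ hδ x]; exact (key δ hδ x j hj hx.2).1
  have hleft : ∀ γ ∈ U, L (F γ) = γ := by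
    intro γ hγ
    have hFγ : F γ ∈ W := hFU γ hγ
    ext x
    have k := key (F γ) hFγ x (ix x) (hixt x) (hixC x)
    have hx1 : L (F γ) x ∈ (e (ix x)).source := by rw [hLW _ hFγ x]; exact k.1
    have hx2 : γ x ∈ (e (ix x)).source := (hγ (ix x) (hixt x) (ix x) (hixt x)
      ⟨hixC x, hixC x⟩).1
    have hfx : f (L (F γ) x) = f (γ x) := by
      rw [hLW _ hFγ x]; exact k.2.2
    have hinj := (e (ix x)).injOn
    apply hinj hx1 hx2
    rw [← hfe (ix x)]
    exact hfx
  have hright : ∀ δ ∈ W, F (L δ) = δ := by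
    intro δ hδ
    ext x
    have k := key δ hδ x (ix x) (hixt x) (hixC x)
    show f (L δ x) = δ x
    rw [hLW δ hδ x]
    exact k.2.2
  have hUopen : IsOpen U := by
    have : U = ⋂ i ∈ t, ⋂ j ∈ t,
        {γ : C(K, M) | MapsTo γ (C i ∩ C j) ((e i).source ∩ (e j).source)} := by
      ext γ; simp [hUdef, mem_iInter]
    rw [this]
    exact isOpen_biInter_finset fun i _ => isOpen_biInter_finset fun j _ =>
      ContinuousMap.isOpen_setOf_mapsTo ((hCcomp i).inter_right (hCcl j))
        ((e i).open_source.inter (e j).open_source)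
  have hWopen : IsOpen W := by
    have : W = ⋂ i ∈ t, ⋂ j ∈ t,
        {δ : C(K, N) | MapsTo δ (C i ∩ C j) (f '' ((e i).source ∩ (e j).source))} := by
      ext δ; simp [hWdef, mem_iInter]
    rw [this]
    exact isOpen_biInter_finset fun i _ => isOpen_biInter_finset fun j _ =>
      ContinuousMap.isOpen_setOf_mapsTo ((hCcomp i).inter_right (hCcl j))
        (hf.isOpenMap _ ((e i).open_source.inter (e j).open_source))
  have hLcont : ContinuousOn L W := by
    rw [continuousOn_iff_continuous_restrict]
    refine ContinuousMap.continuous_compactOpen.2 fun Q hQ V hV => ?_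
    have heq : {δ : W | MapsTo (L (δ : C(K, N))) Q V} =
        Subtype.val ⁻¹' (⋂ i ∈ t,
          {δ : C(K, N) | MapsTo δ (Q ∩ C i) (f '' (V ∩ (e i).source))}) := by
      ext δ
      simp only [mem_setOf_eq, mem_preimage, mem_iInter]
      constructor
      · intro h i hi x hx
        have k := key δ δ.2 x i hi hx.2
        refine ⟨L δ x, ⟨h hx.1, ?_⟩, ?_⟩
        · rw [hLW δ δ.2 x]
          exact (key δ δ.2 x i hi hx.2).1
        · rw [hLW δ δ.2 x]
          exact k.2.2
      · intro h x hx
        obtain ⟨m, hm, hfm⟩ := h (ix x) (hixt x) ⟨hx, hixC x⟩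
        have hem : (e (ix x)) m = δ.1 x := by rw [← hfe (ix x)]; exact hfm
        have : L δ x = m := by
          rw [hLW δ δ.2 x, ← hem, OpenPartialHomeomorph.left_inv _ hm.2]
        rw [this]
        exact hm.1
    show IsOpen {δ : W | MapsTo (L (δ : C(K, N))) Q V}
    rw [heq]
    exact (isOpen_biInter_finset fun i _ =>
      ContinuousMap.isOpen_setOf_mapsTo (hQ.inter_right (hCcl i))
        (hf.isOpenMap _ (hV.inter (e i).open_source))).preimage continuous_subtype_val
  refine ⟨{ toFun := F
            invFun := L
            source := U
            target := W
            map_source' := hFU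
            map_target' := hLU
            left_inv' := hleft
            right_inv' := hright
            open_source := hUopen
            open_target := hWopen
            continuousOn_toFun := (ContinuousMap.continuous_postcomp _).continuousOn
            continuousOn_invFun := hLcont }, hmemU, rfl⟩
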